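/- The function x ↦ √x · tanh(√x / 2) is concave on (0,∞). -/

import Mathlib

open Real

private lemma my_hasDerivAt_tanh (x : ℝ) :
    HasDerivAt Real.tanh (1 / Real.cosh x ^ 2) x := by
  have h := (Real.hasDerivAt_sinh x).div (Real.hasDerivAt_cosh x) (Real.cosh_pos x).ne'
  have he : Real.tanh = fun x => Real.sinh x / Real.cosh x := by
    funext y; exact Real.tanh_eq_sinh_div_cosh y
  rw [he]
  refine h.congr_deriv (Eq.symm ?_)
  have := Real.cosh_sq_sub_sinh_sq x
  have hc0 := (Real.cosh_pos x).ne'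
  field_simp
  nlinarith [Real.cosh_sq_sub_sinh_sq x]

/-- The function `x ↦ √x * tanh (√x / 2)` is concave on `(0, ∞)`. -/
theorem concaveOn_sqrt_mul_tanh_sqrt_half :
    ConcaveOn ℝ (Set.Ioi 0) (fun x : ℝ => Real.sqrt x * Real.tanh (Real.sqrt x / 2)) := by
  set F' : ℝ → ℝ := fun x =>
    Real.tanh (Real.sqrt x / 2) / (2 * Real.sqrt x) + (4 * Real.cosh (Real.sqrt x / 2) ^ 2)⁻¹
    with hF'
  set F'' : ℝ → ℝ := fun x =>
    (Real.sqrt x * Real.cosh (Real.sqrt x / 2)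
      - 2 * Real.sinh (Real.sqrt x / 2) * Real.cosh (Real.sqrt x / 2) ^ 2
      - Real.sqrt x ^ 2 * Real.sinh (Real.sqrt x / 2))
      / (8 * Real.sqrt x ^ 3 * Real.cosh (Real.sqrt x / 2) ^ 3) with hF''
  apply concaveOn_of_hasDerivWithinAt2_nonpos (convex_Ioi 0) (f' := F') (f'' := F'')
  · have hct : Continuous Real.tanh := by
      have : Real.tanh = fun x => Real.sinh x / Real.cosh x := by
        funext y; exact Real.tanh_eq_sinh_div_cosh y
      rw [this]
      exact Real.continuous_sinh.div Real.continuous_cosh fun x => (Real.cosh_pos x).ne'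
    exact (Real.continuous_sqrt.mul (hct.comp (Real.continuous_sqrt.div_const 2))).continuousOn
  · intro x hx
    rw [interior_Ioi] at hx ⊢
    have hxpos : (0:ℝ) < x := hx
    have hs : (0:ℝ) < Real.sqrt x := Real.sqrt_pos.2 hxpos
    have h1 : HasDerivAt Real.sqrt (1 / (2 * Real.sqrt x)) x := Real.hasDerivAt_sqrt hxpos.ne'
    have hv : HasDerivAt (fun x => Real.sqrt x / 2) (1 / (2 * Real.sqrt x) / 2) x := h1.div_const 2
    have htanh : HasDerivAt (fun x => Real.tanh (Real.sqrt x / 2))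
        (1 / Real.cosh (Real.sqrt x / 2) ^ 2 * (1 / (2 * Real.sqrt x) / 2)) x :=
      (my_hasDerivAt_tanh _).comp x hv
    have hf := h1.mul htanh
    have hcpos := Real.cosh_pos (Real.sqrt x / 2)
    have heq : 1 / (2 * Real.sqrt x) * Real.tanh (Real.sqrt x / 2) +
        Real.sqrt x * (1 / Real.cosh (Real.sqrt x / 2) ^ 2 * (1 / (2 * Real.sqrt x) / 2)) = F' x := by
      rw [hF']
      have hx2 : Real.sqrt x ^ 2 = x := Real.sq_sqrt hxpos.le
      field_simp
      ring
    rw [heq] at hf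
    exact hf.hasDerivWithinAt
  · intro x hx
    rw [interior_Ioi] at hx ⊢
    have hxpos : (0:ℝ) < x := hx
    have hs : (0:ℝ) < Real.sqrt x := Real.sqrt_pos.2 hxpos
    have hcpos := Real.cosh_pos (Real.sqrt x / 2)
    have h1 : HasDerivAt Real.sqrt (1 / (2 * Real.sqrt x)) x := Real.hasDerivAt_sqrt hxpos.ne'
    have hv : HasDerivAt (fun x => Real.sqrt x / 2) (1 / (2 * Real.sqrt x) / 2) x := h1.div_const 2
    have htanh : HasDerivAt (fun x => Real.tanh (Real.sqrt x / 2))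
        (1 / Real.cosh (Real.sqrt x / 2) ^ 2 * (1 / (2 * Real.sqrt x) / 2)) x :=
      (my_hasDerivAt_tanh _).comp x hv
    have h2s : HasDerivAt (fun x => 2 * Real.sqrt x) (2 * (1 / (2 * Real.sqrt x))) x :=
      h1.const_mul 2
    have hT1 := htanh.div h2s (by positivity)
    have hcosh : HasDerivAt (fun x => Real.cosh (Real.sqrt x / 2))
        (Real.sinh (Real.sqrt x / 2) * (1 / (2 * Real.sqrt x) / 2)) x :=
      (Real.hasDerivAt_cosh _).comp x hv
    have hc2 := (hcosh.pow 2).const_mul (4:ℝ)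
    have hT2 := hc2.inv (by simp only [Pi.pow_apply]; positivity)
    have hsum := hT1.add hT2
    have hx2 : Real.sqrt x ^ 2 = x := Real.sq_sqrt hxpos.le
    have hsum2 : HasDerivAt F' (F'' x) x := by
      refine hsum.congr_deriv (Eq.symm ?_)
      rw [hF'', Real.tanh_eq_sinh_div_cosh]
      simp only [Pi.pow_apply]
      push_cast
      field_simp
      ring
    exact hsum2.hasDerivWithinAt
  · intro x hx
    rw [interior_Ioi] at hx
    have hxpos : (0:ℝ) < x := hx
    have hs : (0:ℝ) < Real.sqrt x := Real.sqrt_pos.2 hxpos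
    have hcpos := Real.cosh_pos (Real.sqrt x / 2)
    have hshpos : 0 < Real.sinh (Real.sqrt x / 2) := Real.sinh_pos_iff.2 (by positivity)
    have hkey : Real.sqrt x < Real.sinh (Real.sqrt x) := Real.self_lt_sinh_iff.2 (by positivity)
    have h2 : Real.sinh (Real.sqrt x) =
        2 * Real.sinh (Real.sqrt x / 2) * Real.cosh (Real.sqrt x / 2) := by
      rw [← Real.sinh_two_mul]; ring_nf
    rw [hF'']
    apply div_nonpos_of_nonpos_of_nonneg
    · nlinarith [hcpos, hs, Real.one_le_cosh (Real.sqrt x / 2)]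
    · positivity
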